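/- Reduction of the outcome regression to observed data under Condition 1 (no predictive information in treatment assignment): Let H : Ω → ℝ^d be the true history, A the true treatment indicator, A* the prescribed treatment indicator, and H* : Ω → ℝ^m the observed history, assumed to satisfy σ(H*) ⊆ σ(H, A*). Let Y be integrable with E[Y | σ(H, A)] = ν(H) + A·C(H) μ-a.e. for Borel ν, C : ℝ^d → ℝ with ν(H) integrable and C bounded. Assume Condition 1: E[Y | σ(H, A, A*)] = E[Y | σ(H, A)] μ-a.e. Then E[Y | σ(H*, A*)] = E[ν(H) | σ(H*, A*)] + E[A·C(H) | σ(H*, A*)] μ-a.e. -/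

import Mathlib

open MeasureTheory

/-- Reduction of the outcome regression to observed data under Condition 1 (no
predictive information in treatment assignment given the true history and true
treatment). -/
theorem observed_data_outcome_regression_reduction
    {Ω : Type*} [MeasurableSpace Ω] (μ : Measure Ω) [IsProbabilityMeasure μ]
    {d m : ℕ} (H : Ω → (Fin d → ℝ)) (hH : Measurable H)
    (A Astar : Ω → ℝ) (hA : Measurable A) (hAstar : Measurable Astar)
    (hA01 : ∀ ω, A ω = 0 ∨ A ω = 1) (hAstar01 : ∀ ω, Astar ω = 0 ∨ Astar ω = 1)
    (Hstar : Ω → (Fin m → ℝ)) (hHstar : Measurable Hstar)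
    (hHstar_sub : MeasurableSpace.comap Hstar inferInstance ≤
      MeasurableSpace.comap (fun ω => (H ω, Astar ω)) inferInstance)
    (Y : Ω → ℝ) (hY : Integrable Y μ)
    (ν C : (Fin d → ℝ) → ℝ) (hν : Measurable ν) (hC : Measurable C)
    (hνint : Integrable (fun ω => ν (H ω)) μ)
    (hCbdd : ∃ M, ∀ x, |C x| ≤ M)
    (hblip : μ[Y | MeasurableSpace.comap (fun ω => (H ω, A ω)) inferInstance]
      =ᵐ[μ] fun ω => ν (H ω) + A ω * C (H ω))
    (hcond1 : μ[Y | MeasurableSpace.comap (fun ω => (H ω, A ω, Astar ω)) inferInstance]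
      =ᵐ[μ] μ[Y | MeasurableSpace.comap (fun ω => (H ω, A ω)) inferInstance]) :
    μ[Y | MeasurableSpace.comap (fun ω => (Hstar ω, Astar ω)) inferInstance]
      =ᵐ[μ] fun ω =>
        (μ[fun ω' => ν (H ω') |
            MeasurableSpace.comap (fun ω' => (Hstar ω', Astar ω')) inferInstance]) ω
        + (μ[fun ω' => A ω' * C (H ω') |
            MeasurableSpace.comap (fun ω' => (Hstar ω', Astar ω')) inferInstance]) ω := by
  -- notation
  set 𝓖 := MeasurableSpace.comap (fun ω => (Hstar ω, Astar ω)) inferInstance with h𝓖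
  set 𝓗 := MeasurableSpace.comap (fun ω => (H ω, A ω, Astar ω)) inferInstance with h𝓗
  -- 𝓖 ≤ 𝓗
  have hGH : 𝓖 ≤ 𝓗 := by
    have h1 : MeasurableSpace.comap Hstar inferInstance ≤ 𝓗 := by
      refine le_trans hHstar_sub ?_
      have : Measurable[𝓗] (fun ω => (H ω, Astar ω)) := by
        have hm : Measurable[𝓗] (fun ω => (H ω, A ω, Astar ω)) :=
          Measurable.of_comap_le le_rfl
        exact Measurable.prodMk hm.fst hm.snd.snd
      exact fun s hs => by
        obtain ⟨t, ht, rfl⟩ := hs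
        exact this ht
    have h2 : MeasurableSpace.comap Astar inferInstance ≤ 𝓗 := by
      have hm : Measurable[𝓗] (fun ω => (H ω, A ω, Astar ω)) :=
        Measurable.of_comap_le le_rfl
      have : Measurable[𝓗] Astar := hm.snd.snd
      exact fun s hs => by
        obtain ⟨t, ht, rfl⟩ := hs
        exact this ht
    have hGm : Measurable[𝓗] (fun ω => (Hstar ω, Astar ω)) := by
      exact Measurable.prodMk (Measurable.of_comap_le h1) (Measurable.of_comap_le h2)
    exact fun s hs => by
      obtain ⟨t, ht, rfl⟩ := hs
      exact hGm ht
  have hHF : 𝓗 ≤ _ :=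
    (hH.prodMk (hA.prodMk hAstar)).comap_le
  -- tower property
  have htower : μ[Y | 𝓖] =ᵐ[μ] μ[μ[Y | 𝓗] | 𝓖] :=
    (condExp_condExp_of_le (f := Y) (μ := μ) hGH hHF).symm
  -- integrability of A·C(H)
  have hACint : Integrable (fun ω => A ω * C (H ω)) μ := by
    obtain ⟨M, hM⟩ := hCbdd
    refine (integrable_const M).mono' ((hA.mul (hC.comp hH)).aestronglyMeasurable) ?_
    filter_upwards with ω
    rw [Real.norm_eq_abs, abs_mul]
    rcases hA01 ω with h | h <;> simp [h]
    · exact le_trans (abs_nonneg (C (H ω))) (hM _)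
    · exact hM _
  refine htower.trans ?_
  calc μ[μ[Y | 𝓗] | 𝓖]
      =ᵐ[μ] μ[fun ω => ν (H ω) + A ω * C (H ω) | 𝓖] := by
        exact condExp_congr_ae (hcond1.trans hblip)
    _ =ᵐ[μ] fun ω => (μ[fun ω' => ν (H ω') | 𝓖]) ω + (μ[fun ω' => A ω' * C (H ω') | 𝓖]) ω :=
        condExp_add hνint hACint 𝓖
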